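/- Let V be a 3-dimensional vector space over a field k of characteristic ≠ 2 and let φ : V → V* be a map that is homogeneous polynomial of degree 2 (i.e., x ↦ ℓ_{xx} for a bilinear ℓ) such that φ(x) ∧ φ(y) = 0 for all x, y ∈ V (all values pairwise proportional). Then there exist a fixed linear form l ∈ V* and a symmetric bilinear form g on V such that φ(x) = g(x,x)·l for all x ∈ V. -/

import Mathlib

open Module

theorem stmt12 (k V : Type*) [Field k] [AddCommGroup V] [Module k V]
    [FiniteDimensional k V] (hdim : finrank k V = 3) (hchar : (2 : k) ≠ 0)
    (ℓ : V →ₗ[k] V →ₗ[k] Module.Dual k V)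
    (hprop : ∀ x y u v : V, ℓ x x u * ℓ y y v = ℓ x x v * ℓ y y u) :
    ∃ (l : Module.Dual k V) (g : LinearMap.BilinForm k V), g.IsSymm ∧
      ∀ x : V, ℓ x x = g x x • l := by
  by_cases h : ∀ x : V, ℓ x x = 0
  · exact ⟨0, 0, ⟨fun x y => rfl⟩, fun x => by simp [h x]⟩
  · push_neg at h
    obtain ⟨x₀, hx₀⟩ := h
    obtain ⟨u, hu⟩ : ∃ u, ℓ x₀ x₀ u ≠ 0 := by
      by_contra hc; push_neg at hc; exact hx₀ (LinearMap.ext hc)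
    have h2c : (2 : k) * ℓ x₀ x₀ u ≠ 0 := mul_ne_zero hchar hu
    have h2inv : (2 * ℓ x₀ x₀ u)⁻¹ * (2 * ℓ x₀ x₀ u) = 1 := inv_mul_cancel₀ h2c
    refine ⟨ℓ x₀ x₀, (2 * ℓ x₀ x₀ u)⁻¹ • LinearMap.mk₂ k (fun x y => ℓ x y u + ℓ y x u)
      (by intro x y z
          simp only [map_add, LinearMap.add_apply]; ring)
      (by intro a x y
          simp only [map_smul, LinearMap.smul_apply, smul_eq_mul]; ring)
      (by intro x y z
          simp only [map_add, LinearMap.add_apply]; ring)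
      (by intro a x y
          simp only [map_smul, LinearMap.smul_apply, smul_eq_mul]; ring),
      ⟨fun x y => ?_⟩, fun x => ?_⟩
    · simp only [LinearMap.smul_apply, LinearMap.mk₂_apply, smul_eq_mul, RingHom.id_apply]
      ring
    · ext v
      have hp := hprop x x₀ u v
      simp only [LinearMap.smul_apply, LinearMap.mk₂_apply, smul_eq_mul]
      linear_combination (-(2 * ℓ x₀ x₀ u)⁻¹ * 2) * hp - ℓ x x v * h2inv
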